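/- Assume k − 1 ≤ LR and fix 1 ≤ j ≤ k − 1. Then w_i(π^(j)) = w_i(π^(j+1)) for every position i ∈ {1, …, k} with i ≠ j and i ≠ j + 1. -/

import Mathlib

/-- Relative location `h_π(i) = #{1 ≤ j ≤ i : π j = π i}`. -/
def relLoc (π : ℕ → ℕ) (i : ℕ) : ℕ :=
  ((Finset.Icc 1 i).filter (fun j => π j = π i)).card

/-- Intra-cluster coefficient `a_i(π) = d_I + 1 − h_π(i)` (truncated subtraction). -/
def aCoef (dI : ℕ) (π : ℕ → ℕ) (i : ℕ) : ℕ :=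
  dI + 1 - relLoc π i

/-- Cross-cluster coefficient `b_i(π) = max(0, d_C − (i − h_π(i)))` (truncated subtraction). -/
def bCoef (dC : ℕ) (π : ℕ → ℕ) (i : ℕ) : ℕ :=
  dC - (i - relLoc π i)

/-- Part incoming weight `w_i(π)`: for a separate position (`π i = 0`) it is
`(d_I + d_C + 1 − i)·β_C`, otherwise `a_i(π)·β_I + b_i(π)·β_C`. -/
noncomputable def weight (dI dC : ℕ) (βI βC : ℝ) (π : ℕ → ℕ) (i : ℕ) : ℝ :=
  if π i = 0 then ((dI + dC + 1 - i : ℕ) : ℝ) * βC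
  else (aCoef dI π i : ℝ) * βI + (bCoef dC π i : ℝ) * βC

/-- Min-cut `MC(π) = Σ_{i=1}^k min(α, w_i(π))`. -/
noncomputable def MC (k dI dC : ℕ) (βI βC α : ℝ) (π : ℕ → ℕ) : ℝ :=
  ∑ i ∈ Finset.Icc 1 k, min α (weight dI dC βI βC π i)

/-- A cluster order: a `k`-tuple with entries in `{0, 1, …, L}`. -/
def IsClusterOrder (L k : ℕ) (π : ℕ → ℕ) : Prop :=
  ∀ i, 1 ≤ i → i ≤ k → π i ≤ L

/-- A selected node distribution `(s_0, s_1, …, s_L)`: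
`R ≥ s_1 ≥ s_2 ≥ … ≥ s_L` and `s_0 + s_1 + … + s_L = k`. -/
def IsDist (L R k : ℕ) (s : ℕ → ℕ) : Prop :=
  (∀ i, 1 ≤ i → i + 1 ≤ L → s (i + 1) ≤ s i) ∧
  (∀ i, 1 ≤ i → i ≤ L → s i ≤ R) ∧
  ∑ i ∈ Finset.range (L + 1), s i = k

/-- `π ∈ Π(s)`: `π` is a cluster order with `#{1 ≤ j ≤ k : π j = c} = s c` for all `0 ≤ c ≤ L`. -/
def MemPi (L k : ℕ) (s : ℕ → ℕ) (π : ℕ → ℕ) : Prop :=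
  IsClusterOrder L k π ∧
  ∀ c, c ≤ L → ((Finset.Icc 1 k).filter (fun j => π j = c)).card = s c

/-- Vertical order of distribution `s` (possibly with separate entries, whose positions are
not constrained here):  over the cluster positions (`π i ≠ 0`) in increasing order, relative
locations are nondecreasing, with ties broken by increasing cluster index. -/
def IsVerticalOrder (L k : ℕ) (s : ℕ → ℕ) (π : ℕ → ℕ) : Prop :=
  MemPi L k s π ∧
  ∀ i j, 1 ≤ i → i < j → j ≤ k → π i ≠ 0 → π j ≠ 0 →
    relLoc π i ≤ relLoc π j ∧ (relLoc π i = relLoc π j → π i < π j)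

/-- The distribution `s*` (no separate node): `s*_0 = 0`, `s*_i = R` for `1 ≤ i ≤ ⌊k/R⌋`,
`s*_{⌊k/R⌋+1} = k − ⌊k/R⌋·R`, and `0` beyond. -/
def sStar0 (R k : ℕ) : ℕ → ℕ := fun i =>
  if i = 0 then 0
  else if i ≤ k / R then R
  else if i = k / R + 1 then k - k / R * R
  else 0

/-- The distribution with one separate node: `s_0 = 1`, `s_i = R` for `1 ≤ i ≤ ⌊(k−1)/R⌋`,
`s_{⌊(k−1)/R⌋+1} = (k−1) − ⌊(k−1)/R⌋·R`, and `0` beyond. -/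
def sStar1 (R k : ℕ) : ℕ → ℕ := fun i =>
  if i = 0 then 1
  else if i ≤ (k - 1) / R then R
  else if i = (k - 1) / R + 1 then (k - 1) - (k - 1) / R * R
  else 0

/-- `π^(j)`: the cluster order with exactly one separate entry, located at position `j`,
whose cluster entries form the vertical order of the distribution `sStar1 R k`. -/
def IsPiJ (L R k j : ℕ) (π : ℕ → ℕ) : Prop :=
  π j = 0 ∧ IsVerticalOrder L k (sStar1 R k) π

/-! ### Auxiliary lemmas -/

lemma one_le_relLoc (π : ℕ → ℕ) {i : ℕ} (h : 1 ≤ i) : 1 ≤ relLoc π i := by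
  have hm : i ∈ (Finset.Icc 1 i).filter (fun j => π j = π i) := by
    simp [Finset.mem_filter, Finset.mem_Icc, h]
  exact Finset.card_pos.mpr ⟨i, hm⟩

lemma relLoc_lt_relLoc (π : ℕ → ℕ) {i i' : ℕ} (h1 : 1 ≤ i) (hii : i < i')
    (hc : π i = π i') : relLoc π i < relLoc π i' := by
  apply Finset.card_lt_card
  have hsub : (Finset.Icc 1 i).filter (fun j => π j = π i) ⊆
      (Finset.Icc 1 i').filter (fun j => π j = π i') := by
    intro x hx
    simp only [Finset.mem_filter, Finset.mem_Icc] at hx ⊢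
    exact ⟨⟨hx.1.1, hx.1.2.trans hii.le⟩, hx.2.trans hc⟩
  refine (Finset.ssubset_iff_of_subset hsub).mpr ⟨i', ?_, ?_⟩
  · simp only [Finset.mem_filter, Finset.mem_Icc]
    refine ⟨⟨by omega, le_refl _⟩, ?_⟩
    trivial
  · intro hmem
    simp only [Finset.mem_filter, Finset.mem_Icc] at hmem
    omega

lemma relLoc_le_card (π : ℕ → ℕ) {i k : ℕ} (hik : i ≤ k) :
    relLoc π i ≤ ((Finset.Icc 1 k).filter (fun j => π j = π i)).card :=
  Finset.card_le_card (Finset.filter_subset_filter _ (Finset.Icc_subset_Icc_right hik))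

/-- Cluster positions of `π` in `{1, …, k}`. -/
def clusterPos (k : ℕ) (π : ℕ → ℕ) : Finset ℕ :=
  (Finset.Icc 1 k).filter (fun i => π i ≠ 0)

/-- Number of clusters `1 ≤ c ≤ L` with `s c ≥ ℓ`. -/
def Ncount (L : ℕ) (s : ℕ → ℕ) (ℓ : ℕ) : ℕ :=
  ∑ c ∈ Finset.Icc 1 L, if 1 ≤ ℓ ∧ ℓ ≤ s c then 1 else 0

/-- Cumulative count. -/
def Ccum (L : ℕ) (s : ℕ → ℕ) (ℓ : ℕ) : ℕ := ∑ v ∈ Finset.Icc 1 ℓ, Ncount L s v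

lemma Ccum_mono (L : ℕ) (s : ℕ → ℕ) {ℓ ℓ' : ℕ} (h : ℓ ≤ ℓ') : Ccum L s ℓ ≤ Ccum L s ℓ' :=
  Finset.sum_le_sum_of_subset (Finset.Icc_subset_Icc_right h)

lemma count_cluster_level (L k : ℕ) (s π : ℕ → ℕ) (hmem : MemPi L k s π)
    {c : ℕ} (hc : c ≤ L) (ℓ : ℕ) :
    (((Finset.Icc 1 k).filter (fun i => π i = c)).filter (fun i => relLoc π i = ℓ)).card
      = if 1 ≤ ℓ ∧ ℓ ≤ s c then 1 else 0 := by
  set T := (Finset.Icc 1 k).filter (fun i => π i = c) with hT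
  have hTcard : T.card = s c := hmem.2 c hc
  have hinj : Set.InjOn (relLoc π) ↑T := by
    intro x hx y hy hxy
    simp only [hT, Finset.coe_filter, Set.mem_setOf_eq, Finset.mem_Icc] at hx hy
    by_contra hne
    rcases Nat.lt_or_ge x y with h | h
    · exact absurd hxy (relLoc_lt_relLoc π hx.1.1 h (hx.2.trans hy.2.symm)).ne
    · exact absurd hxy.symm (relLoc_lt_relLoc π hy.1.1
        (lt_of_le_of_ne h fun e => hne e.symm) (hy.2.trans hx.2.symm)).ne
  have hsub : T.image (relLoc π) ⊆ Finset.Icc 1 (s c) := by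
    intro v hv
    simp only [Finset.mem_image] at hv
    obtain ⟨x, hx, rfl⟩ := hv
    have hx' := hx
    simp only [hT, Finset.mem_filter, Finset.mem_Icc] at hx'
    refine Finset.mem_Icc.mpr ⟨one_le_relLoc π hx'.1.1, ?_⟩
    calc relLoc π x ≤ ((Finset.Icc 1 k).filter (fun j => π j = π x)).card :=
          relLoc_le_card π hx'.1.2
      _ = s c := by rw [hx'.2, ← hT]; exact hTcard
  have himg : T.image (relLoc π) = Finset.Icc 1 (s c) := by
    apply Finset.eq_of_subset_of_card_le hsub
    rw [Finset.card_image_of_injOn hinj, hTcard]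
    simp
  have key : ((T.filter (fun i => relLoc π i = ℓ)).image (relLoc π))
      = (Finset.Icc 1 (s c)).filter (fun v => v = ℓ) := by
    rw [← himg, Finset.filter_image]
  have hcard1 : (T.filter (fun i => relLoc π i = ℓ)).card
      = ((Finset.Icc 1 (s c)).filter (fun v => v = ℓ)).card := by
    rw [← key]
    exact (Finset.card_image_of_injOn
      (hinj.mono (Finset.coe_subset.mpr (Finset.filter_subset _ _)))).symm
  rw [hcard1, Finset.filter_eq']
  simp only [Finset.mem_Icc, apply_ite Finset.card, Finset.card_singleton, Finset.card_empty]

lemma card_level (L k : ℕ) (s π : ℕ → ℕ) (hmem : MemPi L k s π) (ℓ : ℕ) :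
    ((clusterPos k π).filter (fun i => relLoc π i = ℓ)).card = Ncount L s ℓ := by
  rw [Ncount, Finset.card_eq_sum_card_fiberwise (f := π) (t := Finset.Icc 1 L)
    (fun x (hx : x ∈ (clusterPos k π).filter (fun i => relLoc π i = ℓ)) => by
      simp only [clusterPos, Finset.mem_filter, Finset.mem_Icc] at hx
      exact Finset.mem_Icc.mpr ⟨Nat.one_le_iff_ne_zero.mpr hx.1.2, hmem.1 x hx.1.1.1 hx.1.1.2⟩)]
  refine Finset.sum_congr rfl fun c hc => ?_
  have hc' := Finset.mem_Icc.mp hc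
  rw [← count_cluster_level L k s π hmem hc'.2 ℓ]
  congr 1
  ext x
  simp only [clusterPos, Finset.mem_filter, Finset.mem_Icc]
  constructor
  · rintro ⟨⟨⟨hx, _⟩, hr⟩, hpc⟩
    exact ⟨⟨hx, hpc⟩, hr⟩
  · rintro ⟨⟨hx, hpc⟩, hr⟩
    exact ⟨⟨⟨hx, by omega⟩, hr⟩, hpc⟩

lemma card_level_le (L k : ℕ) (s π : ℕ → ℕ) (hmem : MemPi L k s π) (ℓ : ℕ) :
    ((clusterPos k π).filter (fun i => relLoc π i ≤ ℓ)).card = Ccum L s ℓ := by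
  rw [Ccum, Finset.card_eq_sum_card_fiberwise (f := relLoc π) (t := Finset.Icc 1 ℓ)
    (fun x (hx : x ∈ (clusterPos k π).filter (fun i => relLoc π i ≤ ℓ)) => by
      simp only [clusterPos, Finset.mem_filter, Finset.mem_Icc] at hx
      exact Finset.mem_Icc.mpr ⟨one_le_relLoc π hx.1.1.1, hx.2⟩)]
  refine Finset.sum_congr rfl fun v hv => ?_
  have hv' := Finset.mem_Icc.mp hv
  rw [← card_level L k s π hmem v]
  congr 1
  ext x
  simp only [clusterPos, Finset.mem_filter, Finset.mem_Icc]
  constructor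
  · rintro ⟨⟨hx, _⟩, hr⟩
    exact ⟨hx, hr⟩
  · rintro ⟨hx, hr⟩
    exact ⟨⟨hx, by omega⟩, hr⟩

lemma rank_sandwich (L k : ℕ) (s π : ℕ → ℕ) (hv : IsVerticalOrder L k s π)
    {i : ℕ} (hi : i ∈ clusterPos k π) :
    Ccum L s (relLoc π i - 1) < ((clusterPos k π).filter (fun x => x ≤ i)).card ∧
    ((clusterPos k π).filter (fun x => x ≤ i)).card ≤ Ccum L s (relLoc π i) := by
  have hi' := hi
  simp only [clusterPos, Finset.mem_filter, Finset.mem_Icc] at hi'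
  obtain ⟨⟨hi1, hik⟩, hi0⟩ := hi'
  have hℓ1 : 1 ≤ relLoc π i := one_le_relLoc π hi1
  constructor
  · rw [← card_level_le L k s π hv.1]
    apply Finset.card_lt_card
    have hsub : (clusterPos k π).filter (fun x => relLoc π x ≤ relLoc π i - 1) ⊆
        (clusterPos k π).filter (fun x => x ≤ i) := by
      intro x hx
      simp only [clusterPos, Finset.mem_filter, Finset.mem_Icc] at hx ⊢
      refine ⟨hx.1, ?_⟩
      by_contra hgt
      push_neg at hgt
      have := (hv.2 i x hi1 hgt hx.1.1.2 hi0 hx.1.2).1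
      omega
    refine (Finset.ssubset_iff_of_subset hsub).mpr ⟨i, ?_, ?_⟩
    · simp only [clusterPos, Finset.mem_filter, Finset.mem_Icc]
      exact ⟨⟨⟨hi1, hik⟩, hi0⟩, le_refl _⟩
    · intro hmem
      simp only [clusterPos, Finset.mem_filter, Finset.mem_Icc] at hmem
      omega
  · rw [← card_level_le L k s π hv.1]
    apply Finset.card_le_card
    intro x hx
    simp only [clusterPos, Finset.mem_filter, Finset.mem_Icc] at hx ⊢
    refine ⟨hx.1, ?_⟩
    rcases eq_or_lt_of_le hx.2 with h | h
    · rw [h]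
    · exact (hv.2 x i hx.1.1.1 h hik hx.1.2 hi0).1

lemma relLoc_eq_of_rank (L k : ℕ) (s πa πb : ℕ → ℕ)
    (hva : IsVerticalOrder L k s πa) (hvb : IsVerticalOrder L k s πb)
    {ia ib : ℕ} (hia : ia ∈ clusterPos k πa) (hib : ib ∈ clusterPos k πb)
    (hrank : ((clusterPos k πa).filter (fun x => x ≤ ia)).card
           = ((clusterPos k πb).filter (fun x => x ≤ ib)).card) :
    relLoc πa ia = relLoc πb ib := by
  obtain ⟨ha1, ha2⟩ := rank_sandwich L k s πa hva hia
  obtain ⟨hb1, hb2⟩ := rank_sandwich L k s πb hvb hib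
  rw [hrank] at ha1 ha2
  by_contra hne
  rcases Nat.lt_or_ge (relLoc πa ia) (relLoc πb ib) with h | h
  · have := Ccum_mono L s (show relLoc πa ia ≤ relLoc πb ib - 1 by omega)
    omega
  · have := Ccum_mono L s (show relLoc πb ib ≤ relLoc πa ia - 1 by omega)
    omega

lemma clusterPos_of_IsPiJ (L R k j : ℕ) (π : ℕ → ℕ) (hp : IsPiJ L R k j π)
    (hj : j ∈ Finset.Icc 1 k) :
    clusterPos k π = (Finset.Icc 1 k).erase j := by
  have hcard : ((Finset.Icc 1 k).filter (fun i => π i = 0)).card = 1 := by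
    have := hp.2.1.2 0 (Nat.zero_le L)
    simpa [sStar1] using this
  obtain ⟨a, ha⟩ := Finset.card_eq_one.mp hcard
  have hjmem : j ∈ (Finset.Icc 1 k).filter (fun i => π i = 0) :=
    Finset.mem_filter.mpr ⟨hj, hp.1⟩
  rw [ha] at hjmem
  have haj : a = j := (Finset.mem_singleton.mp hjmem).symm
  rw [haj] at ha
  ext x
  simp only [clusterPos, Finset.mem_filter, Finset.mem_erase]
  constructor
  · rintro ⟨hx, hne⟩
    exact ⟨fun e => hne (e ▸ hp.1), hx⟩
  · rintro ⟨hxj, hx⟩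
    refine ⟨hx, fun h0' => hxj ?_⟩
    have : x ∈ (Finset.Icc 1 k).filter (fun i => π i = 0) := Finset.mem_filter.mpr ⟨hx, h0'⟩
    rw [ha] at this
    exact Finset.mem_singleton.mp this

lemma rank_erase (k j i : ℕ) (hi : i ∈ Finset.Icc 1 k) :
    (((Finset.Icc 1 k).erase j).filter (fun x => x ≤ i)).card
      = if 1 ≤ j ∧ j ≤ i then i - 1 else i := by
  have hi' := Finset.mem_Icc.mp hi
  have h1 : ((Finset.Icc 1 k).erase j).filter (fun x => x ≤ i)
      = (Finset.Icc 1 i).erase j := by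
    ext x
    simp only [Finset.mem_erase, Finset.mem_filter, Finset.mem_Icc]
    omega
  rw [h1]
  by_cases hj : j ∈ Finset.Icc 1 i
  · have hj' := Finset.mem_Icc.mp hj
    rw [Finset.card_erase_of_mem hj, Nat.card_Icc, if_pos hj']
    omega
  · rw [Finset.erase_eq_of_notMem hj, Nat.card_Icc]
    simp only [Finset.mem_Icc] at hj
    rw [if_neg hj]
    omega

/-- `w_i(π^(j)) = w_i(π^(j+1))` for every position `i ∉ {j, j+1}`. -/
theorem stmt14 (L R k dI dC : ℕ) (βI βC : ℝ)
    (hL : 1 ≤ L) (hR : 2 ≤ R) (hk : 2 ≤ k)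
    (hdI : dI = R - 1) (hdC : 1 ≤ dC) (hkd : k ≤ dI + dC)
    (hβ : βC ≤ βI) (hβC : 0 < βC)
    (hk1LR : k - 1 ≤ L * R)
    (j : ℕ) (hj1 : 1 ≤ j) (hjk : j + 1 ≤ k)
    (πa πb : ℕ → ℕ) (ha : IsPiJ L R k j πa) (hb : IsPiJ L R k (j + 1) πb) :
    ∀ i, 1 ≤ i → i ≤ k → i ≠ j → i ≠ j + 1 →
      weight dI dC βI βC πa i = weight dI dC βI βC πb i := by
  intro i hi1 hik hij hij1
  have hjmem : j ∈ Finset.Icc 1 k := Finset.mem_Icc.mpr ⟨hj1, by omega⟩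
  have hj1mem : j + 1 ∈ Finset.Icc 1 k := Finset.mem_Icc.mpr ⟨by omega, hjk⟩
  have himem : i ∈ Finset.Icc 1 k := Finset.mem_Icc.mpr ⟨hi1, hik⟩
  have hca := clusterPos_of_IsPiJ L R k j πa ha hjmem
  have hcb := clusterPos_of_IsPiJ L R k (j + 1) πb hb hj1mem
  have hia : i ∈ clusterPos k πa := by
    rw [hca]; exact Finset.mem_erase.mpr ⟨hij, himem⟩
  have hib : i ∈ clusterPos k πb := by
    rw [hcb]; exact Finset.mem_erase.mpr ⟨hij1, himem⟩
  have hπa : πa i ≠ 0 := by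
    have := hia
    simp only [clusterPos, Finset.mem_filter] at this
    exact this.2
  have hπb : πb i ≠ 0 := by
    have := hib
    simp only [clusterPos, Finset.mem_filter] at this
    exact this.2
  have hrank : ((clusterPos k πa).filter (fun x => x ≤ i)).card
      = ((clusterPos k πb).filter (fun x => x ≤ i)).card := by
    rw [hca, hcb, rank_erase k j i himem, rank_erase k (j + 1) i himem]
    split_ifs <;> omega
  have hrel := relLoc_eq_of_rank L k (sStar1 R k) πa πb ha.2 hb.2 hia hib hrank
  unfold weight aCoef bCoef
  rw [if_neg hπa, if_neg hπb, hrel]
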